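/- arXiv:2407.19446 — 3 statements merged into one kernel-verified Lean document; each statement's English description precedes it below -/
import Mathlib

section
/- Let Ω ⊆ [n]×[n] be an index set, L* ∈ ℝ^{n×n}, S* ∈ ℝ^{n×n}, and let Ω_{S*} = {(i,j) ∈ Ω : S*_{ij} ≠ 0}. Let M satisfy M_{ij} = L*_{ij} + S*_{ij} for (i,j) ∈ Ω. Let {T_λ} be a family of thresholding functions satisfying (P1)–(P3) with constants K, B > 0. Suppose (μr/n)σ1* ≤ β ≤ C_init·(μr/n)σ1* for some C_init ≥ 1, let γ ∈ (0,1), t ∈ ℕ, and set ξ = β·γ^t. If a matrix L satisfies ‖L − L*‖_∞ ≤ (μr/n)σ1*·γ^t, then S := T_ξ(P_Ω(M − L)) (applied entrywise) satisfies: supp(S) ⊆ Ω_{S*}, and ‖P_Ω(S − S*)‖_∞ ≤ (K + B)·C_init·(μr/n)σ1*·γ^t. -/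
open Matrix MeasureTheory
open scoped Classical

noncomputable section

/-- Euclidean norm of a finitely-indexed real vector. -/
def vecNorm {n : Type*} [Fintype n] (v : n → ℝ) : ℝ :=
  Real.sqrt (∑ j, (v j) ^ 2)

/-- Spectral norm (ℓ₂ operator norm) of a real matrix. -/
def specNorm {m n : Type*} [Fintype m] [Fintype n] (A : Matrix m n ℝ) : ℝ :=
  sSup {c : ℝ | ∃ x : n → ℝ, vecNorm x ≤ 1 ∧ c = vecNorm (A.mulVec x)}

/-- Frobenius norm of a real matrix. -/
def frobNorm {m n : Type*} [Fintype m] [Fintype n] (A : Matrix m n ℝ) : ℝ :=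
  Real.sqrt (∑ i, ∑ j, (A i j) ^ 2)

/-- Entrywise maximum norm ‖·‖_∞ of a real matrix. -/
def maxNorm {m n : Type*} [Fintype m] [Fintype n] (A : Matrix m n ℝ) : ℝ :=
  ⨆ i, ⨆ j, |A i j|

/-- Two-to-infinity norm ‖·‖_{2,∞}: maximum Euclidean norm of a row. -/
def twoInfNorm {m n : Type*} [Fintype m] [Fintype n] (A : Matrix m n ℝ) : ℝ :=
  ⨆ i, vecNorm (fun j => A i j)

/-- Projection onto the entries indexed by `Ω`. -/
def projS {n : ℕ} (Ω : Set (Fin n × Fin n)) (Z : Matrix (Fin n) (Fin n) ℝ) :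
    Matrix (Fin n) (Fin n) ℝ :=
  Matrix.of fun i j => if (i, j) ∈ Ω then Z i j else 0


lemma entry_le_maxNorm {m k : Type*} [Fintype m] [Fintype k] (A : Matrix m k ℝ)
    (i : m) (j : k) : |A i j| ≤ maxNorm A := by
  unfold maxNorm
  exact le_trans
    (le_ciSup (f := fun j => |A i j|) (Set.Finite.bddAbove (Set.finite_range _)) j)
    (le_ciSup (f := fun i => ⨆ j, |A i j|) (Set.Finite.bddAbove (Set.finite_range _)) i)

lemma maxNorm_le {m k : Type*} [Fintype m] [Fintype k] [Nonempty m] [Nonempty k]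
    (A : Matrix m k ℝ) {c : ℝ} (h : ∀ i j, |A i j| ≤ c) : maxNorm A ≤ c :=
  ciSup_le fun i => ciSup_le fun j => h i j

/-- Thresholding step for robust matrix completion: if the current low-rank iterate `L`
is entrywise close to `L*`, then `S = T_ξ(P_Ω(M − L))` has support inside
`Ω_{S*} = {(i,j) ∈ Ω : S*_{ij} ≠ 0}` and `‖P_Ω(S − S*)‖_∞ ≤ (K+B)·C_init·(μr/n)σ₁*·γ^t`. -/
theorem stmt3 {n : ℕ} (Ω : Set (Fin n × Fin n))
    (Lstar Sstar M L : Matrix (Fin n) (Fin n) ℝ)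
    (hM : ∀ i j : Fin n, (i, j) ∈ Ω → M i j = Lstar i j + Sstar i j)
    (T : ℝ → ℝ → ℝ) (K B : ℝ) (hK : 0 < K) (hB : 0 < B)
    (hP1 : ∀ lam > (0 : ℝ), ∀ x : ℝ, |x| ≤ lam → T lam x = 0)
    (hP2 : ∀ lam > (0 : ℝ), ∀ x y : ℝ, |T lam x - T lam y| ≤ K * |x - y|)
    (hP3 : ∀ lam > (0 : ℝ), ∀ x : ℝ, |T lam x - x| ≤ B * lam)
    (μ r σ1 : ℝ) (hμ : 0 < μ) (hr : 0 < r) (hσ1 : 0 < σ1)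
    (C_init β γ : ℝ) (hCinit : 1 ≤ C_init)
    (hβ1 : μ * r / n * σ1 ≤ β) (hβ2 : β ≤ C_init * (μ * r / n * σ1))
    (hγ0 : 0 < γ) (hγ1 : γ < 1) (t : ℕ)
    (hL : maxNorm (L - Lstar) ≤ μ * r / n * σ1 * γ ^ t)
    (S : Matrix (Fin n) (Fin n) ℝ)
    (hS : S = Matrix.of fun i j => T (β * γ ^ t) (projS Ω (M - L) i j)) :
    (∀ i j : Fin n, S i j ≠ 0 → (i, j) ∈ Ω ∧ Sstar i j ≠ 0) ∧
    maxNorm (projS Ω (S - Sstar)) ≤ (K + B) * C_init * (μ * r / n * σ1) * γ ^ t := by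
  rcases Nat.eq_zero_or_pos n with h0 | hn
  · subst h0
    refine ⟨fun i => i.elim0, ?_⟩
    have hz : maxNorm (projS Ω (S - Sstar)) = 0 := by
      simp [maxNorm, ciSup_of_empty, Real.sSup_empty]
    rw [hz]
    norm_num
  · have hn' : (0:ℝ) < n := by exact_mod_cast hn
    have ha : 0 < μ * r / n * σ1 := by positivity
    have hgt : (0:ℝ) < γ ^ t := pow_pos hγ0 t
    have hξ : 0 < β * γ ^ t := mul_pos (lt_of_lt_of_le ha hβ1) hgt
    have hLe : ∀ i j : Fin n, |L i j - Lstar i j| ≤ μ * r / n * σ1 * γ ^ t := by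
      intro i j
      have h1 := entry_le_maxNorm (L - Lstar) i j
      rw [Matrix.sub_apply] at h1
      exact h1.trans hL
    have hsupp : ∀ i j : Fin n, S i j ≠ 0 → (i, j) ∈ Ω ∧ Sstar i j ≠ 0 := by
      intro i j hne
      by_contra hcon
      push_neg at hcon
      apply hne
      rw [hS]
      by_cases hmem : (i, j) ∈ Ω
      · have hs0 := hcon hmem
        have hval : projS Ω (M - L) i j = Lstar i j - L i j := by
          simp only [projS, Matrix.of_apply, hmem, if_true, Matrix.sub_apply,
            hM i j hmem, hs0]
          ring
        rw [Matrix.of_apply, hval]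
        apply hP1 _ hξ
        calc |Lstar i j - L i j| = |L i j - Lstar i j| := abs_sub_comm _ _
          _ ≤ μ * r / n * σ1 * γ ^ t := hLe i j
          _ ≤ β * γ ^ t := mul_le_mul_of_nonneg_right hβ1 hgt.le
      · have hval : projS Ω (M - L) i j = 0 := by
          simp [projS, hmem]
        rw [Matrix.of_apply, hval]
        exact hP1 _ hξ 0 (by simpa using hξ.le)
    refine ⟨hsupp, ?_⟩
    haveI : Nonempty (Fin n) := ⟨⟨0, hn⟩⟩
    have hC0 : (0:ℝ) < C_init := lt_of_lt_of_le one_pos hCinit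
    apply maxNorm_le
    intro i j
    by_cases hmem : (i, j) ∈ Ω
    · have hx : projS Ω (S - Sstar) i j = S i j - Sstar i j := by
        simp [projS, hmem]
      rw [hx]
      have hSval : S i j = T (β * γ ^ t) (M i j - L i j) := by
        rw [hS]
        simp [projS, hmem]
      have h1 : |T (β * γ ^ t) (M i j - L i j) - T (β * γ ^ t) (Sstar i j)|
          ≤ K * |M i j - L i j - Sstar i j| := hP2 _ hξ _ _
      have h2 : |T (β * γ ^ t) (Sstar i j) - Sstar i j| ≤ B * (β * γ ^ t) :=
        hP3 _ hξ _
      have harg : M i j - L i j - Sstar i j = Lstar i j - L i j := by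
        rw [hM i j hmem]; ring
      have h3 : |M i j - L i j - Sstar i j| ≤ μ * r / n * σ1 * γ ^ t := by
        rw [harg, abs_sub_comm]; exact hLe i j
      have key : |S i j - Sstar i j|
          ≤ K * (μ * r / n * σ1 * γ ^ t) + B * (β * γ ^ t) := by
        calc |S i j - Sstar i j|
            ≤ |T (β * γ ^ t) (M i j - L i j) - T (β * γ ^ t) (Sstar i j)|
              + |T (β * γ ^ t) (Sstar i j) - Sstar i j| := by
              rw [hSval]; exact abs_sub_le _ _ _
          _ ≤ K * |M i j - L i j - Sstar i j| + B * (β * γ ^ t) :=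
              add_le_add h1 h2
          _ ≤ K * (μ * r / n * σ1 * γ ^ t) + B * (β * γ ^ t) :=
              add_le_add_left (mul_le_mul_of_nonneg_left h3 hK.le) _
      refine key.trans ?_
      have hb : β * γ ^ t ≤ C_init * (μ * r / n * σ1) * γ ^ t := by
        have := mul_le_mul_of_nonneg_right hβ2 hgt.le
        linarith [this]
      nlinarith [mul_pos ha hgt, mul_le_mul_of_nonneg_left hb hB.le,
        mul_le_mul_of_nonneg_right (mul_le_mul_of_nonneg_left hCinit hK.le)
          (mul_pos ha hgt).le]
    · have hx : projS Ω (S - Sstar) i j = 0 := by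
        simp [projS, hmem]
      rw [hx, abs_zero]
      have : 0 < (K + B) * C_init * (μ * r / n * σ1) * γ ^ t := by
        apply mul_pos (mul_pos (mul_pos (by linarith) hC0) ha) hgt
      linarith
end
end

section
/- Let A ∈ ℝ^{N×N} be symmetric with eigenvalues λ1(A) ≥ λ2(A) ≥ … ordered decreasingly and λr(A) > 0, and let Ã = A + W with W symmetric. Let F ∈ ℝ^{N×r} (resp. F̃) have orthonormal columns consisting of eigenvectors of A (resp. Ã) corresponding to its r largest eigenvalues, with FᵀAF = Λ and F̃ᵀÃF̃ = Λ̃ the corresponding diagonal matrices of eigenvalues. Let H = FᵀF̃ have SVD AΣ̃Bᵀ and set G = ABᵀ. Define δ = λr(A) − λ_{r+1}(A). If ‖W‖₂ < δ, then ‖F̃ − FG‖_F ≤ √2·‖WF‖_F/(δ − ‖W‖₂). -/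
open Matrix MeasureTheory
open scoped Classical

noncomputable section

namespace DK

variable {m n p : Type*} [Fintype m] [Fintype n] [Fintype p]

lemma sum_sq_nonneg (v : n → ℝ) : 0 ≤ ∑ j, v j ^ 2 :=
  Finset.sum_nonneg fun _ _ => sq_nonneg _

lemma vecNorm_nonneg (v : n → ℝ) : 0 ≤ vecNorm v := Real.sqrt_nonneg _

lemma vecNorm_sq (v : n → ℝ) : vecNorm v ^ 2 = ∑ j, v j ^ 2 :=
  Real.sq_sqrt (sum_sq_nonneg v)

lemma vecNorm_dot (v : n → ℝ) : v ⬝ᵥ v = vecNorm v ^ 2 := by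
  rw [vecNorm_sq]; simp [dotProduct, sq]

lemma vecNorm_le_of_sq_le {v : n → ℝ} {c : ℝ} (hc : 0 ≤ c)
    (h : ∑ j, v j ^ 2 ≤ c ^ 2) : vecNorm v ≤ c := by
  have := Real.sqrt_le_sqrt h
  rwa [Real.sqrt_sq hc] at this

lemma dot_le (v w : n → ℝ) : v ⬝ᵥ w ≤ vecNorm v * vecNorm w := by
  have h := Finset.sum_mul_sq_le_sq_mul_sq Finset.univ v w
  have h2 : v ⬝ᵥ w ≤ |v ⬝ᵥ w| := le_abs_self _
  refine h2.trans ?_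
  rw [← Real.sqrt_sq_eq_abs]
  calc Real.sqrt ((v ⬝ᵥ w) ^ 2) ≤ Real.sqrt ((∑ j, v j ^ 2) * ∑ j, w j ^ 2) :=
        Real.sqrt_le_sqrt (by simpa [dotProduct] using h)
    _ = vecNorm v * vecNorm w := Real.sqrt_mul (sum_sq_nonneg v) _

lemma vecNorm_smul (c : ℝ) (v : n → ℝ) : vecNorm (c • v) = |c| * vecNorm v := by
  unfold vecNorm
  rw [← Real.sqrt_sq_eq_abs, ← Real.sqrt_mul (sq_nonneg c)]
  congr 1
  rw [Finset.mul_sum]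
  refine Finset.sum_congr rfl fun j _ => ?_
  simp [mul_pow]

lemma vecNorm_eq_zero_iff {v : n → ℝ} : vecNorm v = 0 ↔ v = 0 := by
  unfold vecNorm
  rw [Real.sqrt_eq_zero (sum_sq_nonneg v)]
  constructor
  · intro h
    funext j
    have := (Finset.sum_eq_zero_iff_of_nonneg (fun i _ => sq_nonneg (v i))).1 h j (Finset.mem_univ j)
    exact pow_eq_zero_iff (by norm_num) |>.1 this
  · intro h; simp [h]

lemma frobNorm_nonneg (A : Matrix m n ℝ) : 0 ≤ frobNorm A := Real.sqrt_nonneg _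

lemma frobNorm_sq (A : Matrix m n ℝ) : frobNorm A ^ 2 = ∑ i, ∑ j, (A i j) ^ 2 :=
  Real.sq_sqrt (Finset.sum_nonneg fun _ _ => sum_sq_nonneg _)

lemma mulVec_le_frob (A : Matrix m n ℝ) (x : n → ℝ) :
    vecNorm (A *ᵥ x) ≤ frobNorm A * vecNorm x := by
  refine vecNorm_le_of_sq_le (mul_nonneg (Real.sqrt_nonneg _) (vecNorm_nonneg x)) ?_
  rw [mul_pow, vecNorm_sq, frobNorm_sq]
  rw [Finset.sum_mul]
  refine Finset.sum_le_sum fun i _ => ?_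
  have := Finset.sum_mul_sq_le_sq_mul_sq Finset.univ (fun j => A i j) x
  simpa [Matrix.mulVec, dotProduct] using this

lemma specNorm_nonneg (A : Matrix m n ℝ) : 0 ≤ specNorm A := by
  have h0 : (0:ℝ) ∈ {c : ℝ | ∃ x : n → ℝ, vecNorm x ≤ 1 ∧ c = vecNorm (A.mulVec x)} := by
    refine ⟨0, ?_, ?_⟩
    · simp [vecNorm_eq_zero_iff.2 rfl]
    · simp [vecNorm_eq_zero_iff.2 rfl, Matrix.mulVec_zero]
  have hb : BddAbove {c : ℝ | ∃ x : n → ℝ, vecNorm x ≤ 1 ∧ c = vecNorm (A.mulVec x)} := by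
    refine ⟨frobNorm A, fun c hc => ?_⟩
    obtain ⟨x, hx, rfl⟩ := hc
    calc vecNorm (A *ᵥ x) ≤ frobNorm A * vecNorm x := mulVec_le_frob A x
      _ ≤ frobNorm A * 1 := by
          exact mul_le_mul_of_nonneg_left hx (Real.sqrt_nonneg _)
      _ = frobNorm A := mul_one _
  exact le_csSup hb h0

lemma specNorm_bddAbove (A : Matrix m n ℝ) :
    BddAbove {c : ℝ | ∃ x : n → ℝ, vecNorm x ≤ 1 ∧ c = vecNorm (A.mulVec x)} := by
  refine ⟨frobNorm A, fun c hc => ?_⟩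
  obtain ⟨x, hx, rfl⟩ := hc
  calc vecNorm (A *ᵥ x) ≤ frobNorm A * vecNorm x := mulVec_le_frob A x
    _ ≤ frobNorm A * 1 := mul_le_mul_of_nonneg_left hx (Real.sqrt_nonneg _)
    _ = frobNorm A := mul_one _

lemma mulVec_le_spec (A : Matrix m n ℝ) (x : n → ℝ) :
    vecNorm (A *ᵥ x) ≤ specNorm A * vecNorm x := by
  by_cases hx : x = 0
  · simp [hx, Matrix.mulVec_zero, vecNorm_eq_zero_iff.2 rfl]
  · have hpos : 0 < vecNorm x := by
      rcases lt_or_eq_of_le (vecNorm_nonneg x) with h | h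
      · exact h
      · exact absurd (vecNorm_eq_zero_iff.1 h.symm) hx
    set c := (vecNorm x)⁻¹ with hc
    have hcu : vecNorm (c • x) = 1 := by
      rw [vecNorm_smul, abs_of_pos (inv_pos.2 hpos)]
      field_simp
    have hmem : vecNorm (A *ᵥ (c • x)) ∈
        {c : ℝ | ∃ y : n → ℝ, vecNorm y ≤ 1 ∧ c = vecNorm (A.mulVec y)} :=
      ⟨c • x, le_of_eq hcu, rfl⟩
    have hle := le_csSup (specNorm_bddAbove A) hmem
    have heq : vecNorm (A *ᵥ (c • x)) = c * vecNorm (A *ᵥ x) := by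
      rw [Matrix.mulVec_smul, vecNorm_smul, abs_of_pos (inv_pos.2 hpos)]
    rw [heq] at hle
    have hx1 : c * vecNorm x = 1 := inv_mul_cancel₀ hpos.ne'
    calc vecNorm (A *ᵥ x) = (c * vecNorm (A *ᵥ x)) * vecNorm x := by
          rw [mul_comm c, mul_assoc, hx1, mul_one]
      _ ≤ specNorm A * vecNorm x := mul_le_mul_of_nonneg_right hle hpos.le
    
lemma quad_le_spec (A : Matrix n n ℝ) (x : n → ℝ) :
    x ⬝ᵥ (A *ᵥ x) ≤ specNorm A * vecNorm x ^ 2 := by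
  calc x ⬝ᵥ (A *ᵥ x) ≤ vecNorm x * vecNorm (A *ᵥ x) := dot_le _ _
    _ ≤ vecNorm x * (specNorm A * vecNorm x) := by
        exact mul_le_mul_of_nonneg_left (mulVec_le_spec A x) (vecNorm_nonneg x)
    _ = specNorm A * vecNorm x ^ 2 := by ring

variable {m n p : Type*} [Fintype m] [Fintype n] [Fintype p]

lemma vecNorm_dot' (v : n → ℝ) : v ⬝ᵥ v = ∑ j, v j ^ 2 := by
  simp [dotProduct, sq]

lemma dot_mulVec_left (U : Matrix m n ℝ) (x : m → ℝ) (y : n → ℝ) :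
    x ⬝ᵥ (U *ᵥ y) = (Uᵀ *ᵥ x) ⬝ᵥ y := by
  rw [Matrix.dotProduct_mulVec, Matrix.mulVec_transpose]

lemma sum_sq_eq_trace (X : Matrix m n ℝ) : ∑ i, ∑ j, X i j ^ 2 = ∑ j, (Xᵀ * X) j j := by
  rw [Finset.sum_comm]
  refine Finset.sum_congr rfl fun j _ => ?_
  simp [Matrix.mul_apply, sq]

lemma sum_mul_eq_trace (X Y : Matrix m n ℝ) :
    ∑ i, ∑ j, X i j * Y i j = ∑ j, (Xᵀ * Y) j j := by
  rw [Finset.sum_comm]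
  refine Finset.sum_congr rfl fun j _ => ?_
  simp [Matrix.mul_apply]

lemma sum_sq_transpose (X : Matrix m n ℝ) :
    ∑ i, ∑ j, (Xᵀ) i j ^ 2 = ∑ i, ∑ j, X i j ^ 2 := by
  rw [Finset.sum_comm]
  rfl

lemma orth_frob [DecidableEq n] {U : Matrix m n ℝ} (hU : Uᵀ * U = 1) (M : Matrix n p ℝ) :
    ∑ i, ∑ j, (U * M) i j ^ 2 = ∑ i, ∑ j, M i j ^ 2 := by
  rw [sum_sq_eq_trace, sum_sq_eq_trace M]
  have h : (U * M)ᵀ * (U * M) = Mᵀ * M := by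
    rw [Matrix.transpose_mul, Matrix.mul_assoc, ← Matrix.mul_assoc Uᵀ, hU, Matrix.one_mul]
  rw [h]

lemma orth_mulVec [DecidableEq n] {U : Matrix m n ℝ} (hU : Uᵀ * U = 1) (v : n → ℝ) :
    vecNorm (U *ᵥ v) = vecNorm v := by
  unfold vecNorm
  congr 1
  rw [← vecNorm_dot', ← vecNorm_dot']
  rw [dot_mulVec_left, Matrix.mulVec_mulVec, hU, Matrix.one_mulVec]

lemma sum_of_zero_ge {N k : ℕ} (hk : k ≤ N) (φ : Fin N → ℝ)
    (hφ : ∀ i : Fin N, k ≤ (i : ℕ) → φ i = 0) :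
    ∑ i, φ i = ∑ j : Fin k, φ (Fin.castLE hk j) := by
  have hz : ∀ x : Fin N, x ∈ Finset.univ →
      x ∉ Finset.univ.map (Fin.castLEEmb hk) → φ x = 0 := by
    intro x _ hx
    apply hφ
    by_contra hlt
    push_neg at hlt
    exact hx (Finset.mem_map.2 ⟨⟨x, hlt⟩, Finset.mem_univ _, by simp [Fin.castLEEmb]⟩)
  rw [← Finset.sum_subset (Finset.subset_univ _) hz, Finset.sum_map]
  rfl

lemma filter_lt_eq_map {N r : ℕ} (hrN : r ≤ N) :
    Finset.univ.filter (fun i : Fin N => (i : ℕ) < r) =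
      Finset.univ.map (Fin.castLEEmb hrN) := by
  ext x
  simp only [Finset.mem_filter, Finset.mem_univ, true_and, Finset.mem_map, Fin.castLEEmb,
    Function.Embedding.coeFn_mk]
  constructor
  · intro hx
    refine ⟨⟨x, hx⟩, ?_⟩
    simp [Fin.castLE]
  · rintro ⟨j, rfl⟩
    exact j.isLt

lemma sum_split {N r : ℕ} (hrN : r ≤ N) (φ : Fin N → ℝ) :
    ∑ i, φ i = (∑ j : Fin r, φ (Fin.castLE hrN j)) +
      ∑ i ∈ Finset.univ.filter (fun i : Fin N => r ≤ (i : ℕ)), φ i := by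
  rw [← Finset.sum_filter_add_sum_filter_not Finset.univ (fun i : Fin N => (i : ℕ) < r)]
  congr 1
  · rw [filter_lt_eq_map hrN, Finset.sum_map]
    rfl
  · congr 1
    ext x
    simp [not_lt]


lemma quad_diag {N : ℕ} (Q : Matrix (Fin N) (Fin N) ℝ) (lam : Fin N → ℝ) (x : Fin N → ℝ) :
    x ⬝ᵥ ((Q * Matrix.diagonal lam * Qᵀ) *ᵥ x) = ∑ i, lam i * ((Qᵀ *ᵥ x) i) ^ 2 := by
  rw [← Matrix.mulVec_mulVec, ← Matrix.mulVec_mulVec, dot_mulVec_left]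
  simp only [Matrix.mulVec_diagonal, dotProduct]
  refine Finset.sum_congr rfl fun i _ => ?_
  ring

lemma weyl {N r : ℕ} (hrN : r < N) (Am W : Matrix (Fin N) (Fin N) ℝ)
    (Q Qt : Matrix (Fin N) (Fin N) ℝ) (lam lamt : Fin N → ℝ)
    (hQ : Qᵀ * Q = 1) (hQt : Qtᵀ * Qt = 1)
    (hlam : ∀ i j : Fin N, i ≤ j → lam j ≤ lam i)
    (hlamt : ∀ i j : Fin N, i ≤ j → lamt j ≤ lamt i)
    (hAeig : Am = Q * Matrix.diagonal lam * Qᵀ)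
    (hAteig : Am + W = Qt * Matrix.diagonal lamt * Qtᵀ) :
    lamt ⟨r, hrN⟩ ≤ lam ⟨r, hrN⟩ + specNorm W := by
  have hr1N : r + 1 ≤ N := hrN
  -- the (r+1)×(r+1) matrix whose kernel gives the test vector
  set M : Matrix (Fin (r+1)) (Fin (r+1)) ℝ :=
    fun j i => if h : (j : ℕ) < r then (Qᵀ * Qt) ⟨j, by omega⟩ (Fin.castLE hr1N i) else 0
    with hM
  have hdet : M.det = 0 := by
    apply Matrix.det_eq_zero_of_row_eq_zero ⟨r, by omega⟩
    intro i
    simp [hM]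
  obtain ⟨c, hc0, hMc⟩ := (Matrix.exists_mulVec_eq_zero_iff).2 hdet
  -- extend c by zero
  set c' : Fin N → ℝ := fun i => if h : (i : ℕ) < r + 1 then c ⟨i, h⟩ else 0 with hc'
  have hc'cast : ∀ k : Fin (r+1), c' (Fin.castLE hr1N k) = c k := by
    intro k; have hk : ¬ r < (k:ℕ) := by have := k.isLt; omega
    simp [hc', Fin.castLE, k.isLt, hk]
  have hc'zero : ∀ i : Fin N, r + 1 ≤ (i : ℕ) → c' i = 0 := by
    intro i hi; have hi' : ¬ (i:ℕ) ≤ r := by omega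
    simp [hc', Nat.not_lt.2 hi, hi']
  set x : Fin N → ℝ := Qt *ᵥ c' with hx
  have hQtQt : Qt * Qtᵀ = 1 := mul_eq_one_comm.1 hQt
  have hQQ : Q * Qᵀ = 1 := mul_eq_one_comm.1 hQ
  have hQtx : Qtᵀ *ᵥ x = c' := by
    rw [hx, Matrix.mulVec_mulVec, hQt, Matrix.one_mulVec]
  -- small coordinates of Qᵀ x vanish
  have hdsmall : ∀ j : Fin N, (j : ℕ) < r → (Qᵀ *ᵥ x) j = 0 := by
    intro j hj
    have hdj : (Qᵀ *ᵥ x) j = ∑ i, (Qᵀ * Qt) j i * c' i := by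
      rw [hx, Matrix.mulVec_mulVec]
      simp [Matrix.mulVec, dotProduct]
    rw [hdj, sum_of_zero_ge hr1N (fun i => (Qᵀ * Qt) j i * c' i)
      (fun i hi => by rw [hc'zero i hi, mul_zero])]
    have : ∀ k : Fin (r+1), (Qᵀ * Qt) j (Fin.castLE hr1N k) * c' (Fin.castLE hr1N k)
        = M ⟨j, by omega⟩ k * c k := by
      intro k
      rw [hc'cast]
      congr 1
      simp [hM, hj]
    rw [Finset.sum_congr rfl fun k _ => this k]
    have := congrFun hMc ⟨j, by omega⟩
    simpa [Matrix.mulVec, dotProduct] using this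
  -- norms
  have hsum_c' : ∑ i, c' i ^ 2 = ∑ k, c k ^ 2 := by
    rw [sum_of_zero_ge hr1N (fun i => c' i ^ 2)
      (fun i hi => by rw [hc'zero i hi]; ring)]
    exact Finset.sum_congr rfl fun k _ => by rw [hc'cast]
  have hspos : 0 < ∑ i, c' i ^ 2 := by
    rw [hsum_c']
    have : ∃ k, c k ≠ 0 := by
      by_contra h
      push_neg at h
      exact hc0 (funext fun k => h k)
    obtain ⟨k, hk⟩ := this
    have h1 : 0 < c k ^ 2 := by positivity
    exact h1.trans_le (Finset.single_le_sum (fun i _ => sq_nonneg (c i)) (Finset.mem_univ k))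
  have hxnorm : vecNorm x ^ 2 = ∑ i, c' i ^ 2 := by
    rw [hx, orth_mulVec hQt, vecNorm_sq]
  have hdnorm : ∑ i, (Qᵀ *ᵥ x) i ^ 2 = ∑ i, c' i ^ 2 := by
    have h2 : vecNorm (Qᵀ *ᵥ x) ^ 2 = vecNorm x ^ 2 := by
      rw [orth_mulVec (by rwa [Matrix.transpose_transpose] : (Qᵀ)ᵀ * Qᵀ = 1)]
    rw [← vecNorm_sq, h2, hxnorm]
  -- lower bound for the perturbed quadratic form
  have hlower : lamt ⟨r, hrN⟩ * ∑ i, c' i ^ 2 ≤ x ⬝ᵥ ((Am + W) *ᵥ x) := by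
    rw [hAteig, quad_diag, hQtx]
    rw [Finset.mul_sum]
    refine Finset.sum_le_sum fun i _ => ?_
    by_cases hi : (i : ℕ) < r + 1
    · have : lamt ⟨r, hrN⟩ ≤ lamt i := hlamt i ⟨r, hrN⟩ (by exact Nat.lt_succ_iff.1 hi)
      exact mul_le_mul_of_nonneg_right this (sq_nonneg _)
    · rw [hc'zero i (Nat.not_lt.1 hi)]
      simp
  -- upper bound for the unperturbed quadratic form
  have hupper : x ⬝ᵥ (Am *ᵥ x) ≤ lam ⟨r, hrN⟩ * ∑ i, c' i ^ 2 := by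
    rw [hAeig, quad_diag]
    rw [← hdnorm, Finset.mul_sum]
    refine Finset.sum_le_sum fun i _ => ?_
    by_cases hi : (i : ℕ) < r
    · rw [hdsmall i hi]
      simp
    · have : lam i ≤ lam ⟨r, hrN⟩ := hlam ⟨r, hrN⟩ i (Nat.not_lt.1 hi)
      exact mul_le_mul_of_nonneg_right this (sq_nonneg _)
  have hWbound : x ⬝ᵥ (W *ᵥ x) ≤ specNorm W * ∑ i, c' i ^ 2 := by
    rw [← hxnorm]
    exact quad_le_spec W x
  have hsplit : x ⬝ᵥ ((Am + W) *ᵥ x) = x ⬝ᵥ (Am *ᵥ x) + x ⬝ᵥ (W *ᵥ x) := by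
    rw [Matrix.add_mulVec, dotProduct_add]
  have final : lamt ⟨r, hrN⟩ * ∑ i, c' i ^ 2 ≤
      (lam ⟨r, hrN⟩ + specNorm W) * ∑ i, c' i ^ 2 := by
    calc lamt ⟨r, hrN⟩ * ∑ i, c' i ^ 2 ≤ x ⬝ᵥ ((Am + W) *ᵥ x) := hlower
      _ = x ⬝ᵥ (Am *ᵥ x) + x ⬝ᵥ (W *ᵥ x) := hsplit
      _ ≤ lam ⟨r, hrN⟩ * (∑ i, c' i ^ 2) + specNorm W * ∑ i, c' i ^ 2 :=
          add_le_add hupper hWbound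
      _ = (lam ⟨r, hrN⟩ + specNorm W) * ∑ i, c' i ^ 2 := by ring
  nlinarith [final, hspos]

lemma transpose_mulVec_le [DecidableEq n] {U : Matrix m n ℝ} (hU : Uᵀ * U = 1) (w : m → ℝ) :
    vecNorm (Uᵀ *ᵥ w) ≤ vecNorm w := by
  have h1 : vecNorm (Uᵀ *ᵥ w) ^ 2 = w ⬝ᵥ (U *ᵥ (Uᵀ *ᵥ w)) := by
    rw [dot_mulVec_left, vecNorm_dot]
  have h2 : w ⬝ᵥ (U *ᵥ (Uᵀ *ᵥ w)) ≤ vecNorm w * vecNorm (Uᵀ *ᵥ w) := by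
    have h3 := dot_le w (U *ᵥ (Uᵀ *ᵥ w))
    rwa [orth_mulVec hU] at h3
  nlinarith [vecNorm_nonneg (Uᵀ *ᵥ w), vecNorm_nonneg w]

lemma frobNorm_le_of_sq_le {A : Matrix m n ℝ} {c : ℝ} (hc : 0 ≤ c)
    (h : ∑ i, ∑ j, A i j ^ 2 ≤ c ^ 2) : frobNorm A ≤ c := by
  have := Real.sqrt_le_sqrt h
  rwa [Real.sqrt_sq hc] at this

lemma sum_sq_diagonal [DecidableEq n] (σ : n → ℝ) :
    ∑ i, ∑ j, (Matrix.diagonal σ i j) ^ 2 = ∑ i, σ i ^ 2 := by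
  refine Finset.sum_congr rfl fun i _ => ?_
  rw [Finset.sum_eq_single i]
  · simp [Matrix.diagonal_apply]
  · intro b _ hb
    simp [Matrix.diagonal_apply, Ne.symm hb]
  · intro h
    exact absurd (Finset.mem_univ i) h

lemma sub_orth {N r : ℕ} (hrN : r ≤ N) (Q : Matrix (Fin N) (Fin N) ℝ) (hQ : Qᵀ * Q = 1) :
    (Q.submatrix id (Fin.castLE hrN))ᵀ * Q.submatrix id (Fin.castLE hrN) = 1 := by
  ext i j
  have h1 : ((Q.submatrix id (Fin.castLE hrN))ᵀ * Q.submatrix id (Fin.castLE hrN)) i j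
      = (Qᵀ * Q) (Fin.castLE hrN i) (Fin.castLE hrN j) := by
    simp [Matrix.mul_apply]
  rw [h1, hQ]
  by_cases hij : i = j
  · simp [hij, Matrix.one_apply]
  · have : Fin.castLE hrN i ≠ Fin.castLE hrN j := by
      simpa [Fin.castLE_inj] using hij
    simp [Matrix.one_apply, hij, this]

end DK

set_option maxHeartbeats 1000000 in
/-- Davis–Kahan-type bound: `‖F̃ − FG‖_F ≤ √2·‖WF‖_F/(δ − ‖W‖₂)` for the top-`r`
eigenvector matrices of a symmetric matrix `A` and its perturbation `Ã = A + W`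
(Ding–Chen, Lemma 14). -/
theorem stmt9 {N r : ℕ} (hr : 0 < r) (hrN : r < N)
    (Am W : Matrix (Fin N) (Fin N) ℝ) (hAsymm : Am.IsSymm) (hWsymm : W.IsSymm)
    -- eigendecompositions of A and Ã = A + W with decreasing eigenvalues
    (Q Qt : Matrix (Fin N) (Fin N) ℝ) (lam lamt : Fin N → ℝ)
    (hQ : Qᵀ * Q = 1) (hQt : Qtᵀ * Qt = 1)
    (hlam : ∀ i j : Fin N, i ≤ j → lam j ≤ lam i)
    (hlamt : ∀ i j : Fin N, i ≤ j → lamt j ≤ lamt i)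
    (hAeig : Am = Q * Matrix.diagonal lam * Qᵀ)
    (hAteig : Am + W = Qt * Matrix.diagonal lamt * Qtᵀ)
    (hpos : 0 < lam ⟨r - 1, by omega⟩)
    -- F, F̃: orthonormal eigenvectors for the r largest eigenvalues
    (F Ft : Matrix (Fin N) (Fin r) ℝ)
    (hF : F = Q.submatrix id (Fin.castLE hrN.le))
    (hFt : Ft = Qt.submatrix id (Fin.castLE hrN.le))
    -- SVD of H = FᵀF̃ and the rotation G
    (A' B' : Matrix (Fin r) (Fin r) ℝ) (σtil : Fin r → ℝ)
    (hA' : A'ᵀ * A' = 1) (hB' : B'ᵀ * B' = 1) (hσtil : ∀ i, 0 ≤ σtil i)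
    (hH : Fᵀ * Ft = A' * Matrix.diagonal σtil * B'ᵀ)
    (G : Matrix (Fin r) (Fin r) ℝ) (hG : G = A' * B'ᵀ)
    -- eigengap condition
    (δ : ℝ) (hδ : δ = lam ⟨r - 1, by omega⟩ - lam ⟨r, hrN⟩)
    (hW : specNorm W < δ) :
    frobNorm (Ft - F * G) ≤ Real.sqrt 2 * frobNorm (W * F) / (δ - specNorm W) := by
  have hrN' : r ≤ N := hrN.le
  set e : Fin r → Fin N := Fin.castLE hrN' with he
  have hs0 : 0 ≤ specNorm W := DK.specNorm_nonneg W
  have hgap : 0 < δ - specNorm W := sub_pos.2 hW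
  have hFF : Fᵀ * F = 1 := by rw [hF]; exact DK.sub_orth hrN' Q hQ
  have hFtFt : Ftᵀ * Ft = 1 := by rw [hFt]; exact DK.sub_orth hrN' Qt hQt
  have hweyl : lamt ⟨r, hrN⟩ ≤ lam ⟨r, hrN⟩ + specNorm W :=
    DK.weyl hrN Am W Q Qt lam lamt hQ hQt hlam hlamt hAeig hAteig
  set Z : Matrix (Fin N) (Fin r) ℝ := Qtᵀ * F with hZ
  set Y : Matrix (Fin N) (Fin r) ℝ := Qtᵀ * (W * F) with hY
  -- key identity
  have hQtA : Qtᵀ * (Am + W) = Matrix.diagonal lamt * Qtᵀ := by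
    rw [hAteig, ← Matrix.mul_assoc, ← Matrix.mul_assoc, hQt, Matrix.one_mul]
  have hAQ : Am * Q = Q * Matrix.diagonal lam := by
    rw [hAeig, Matrix.mul_assoc (Q * Matrix.diagonal lam), hQ, Matrix.mul_one]
  have hAF : ∀ (i : Fin N) (j : Fin r), (Am * F) i j = F i j * lam (e j) := by
    intro i j
    have h1 : (Am * F) i j = (Am * Q) i (e j) := by
      rw [hF]; simp [Matrix.mul_apply]
    rw [h1, hAQ, Matrix.mul_diagonal, hF]
    simp [he]
  have key : ∀ (i : Fin N) (j : Fin r), (lamt i - lam (e j)) * Z i j = Y i j := by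
    intro i j
    have h1 : (Qtᵀ * ((Am + W) * F)) i j = lamt i * Z i j := by
      rw [← Matrix.mul_assoc, hQtA, Matrix.mul_assoc, ← hZ]
      exact Matrix.diagonal_mul lamt Z i j
    have h2 : (Qtᵀ * (Am * F)) i j = Z i j * lam (e j) := by
      calc (Qtᵀ * (Am * F)) i j = ∑ k, Qtᵀ i k * (F k j * lam (e j)) := by
            simp only [Matrix.mul_apply]
            exact Finset.sum_congr rfl fun k _ => by rw [← Matrix.mul_apply, hAF]
        _ = (∑ k, Qtᵀ i k * F k j) * lam (e j) := by
            rw [Finset.sum_mul]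
            exact Finset.sum_congr rfl fun k _ => by ring
        _ = Z i j * lam (e j) := by rw [hZ]; simp [Matrix.mul_apply]
    have h3 : (Qtᵀ * ((Am + W) * F)) i j = (Qtᵀ * (Am * F)) i j + Y i j := by
      rw [hY, Matrix.add_mul, Matrix.mul_add]
      simp [Matrix.add_apply]
    rw [h1, h2] at h3
    linear_combination h3
  -- total Frobenius mass of Z
  have hQtT : (Qtᵀ)ᵀ * Qtᵀ = 1 := by
    rw [Matrix.transpose_transpose]
    exact mul_eq_one_comm.1 hQt
  have hTotZ : ∑ i, ∑ j, Z i j ^ 2 = (r : ℝ) := by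
    rw [hZ, DK.orth_frob hQtT F, DK.sum_sq_eq_trace, hFF]
    simp [Matrix.one_apply]
  have hZH : ∀ (k : Fin r) (j : Fin r), Z (e k) j = (Fᵀ * Ft) j k := by
    intro k j
    rw [hZ, hFt]
    simp only [Matrix.mul_apply, Matrix.transpose_apply, Matrix.submatrix_apply, id]
    exact Finset.sum_congr rfl fun a _ => by rw [mul_comm]
  have hHsq : ∑ j, ∑ k, (Fᵀ * Ft) j k ^ 2 = ∑ i, σtil i ^ 2 := by
    rw [hH, Matrix.mul_assoc, DK.orth_frob hA']
    have h2 : ∑ i, ∑ j, (Matrix.diagonal σtil * B'ᵀ) i j ^ 2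
        = ∑ i, ∑ j, (B' * Matrix.diagonal σtil) i j ^ 2 := by
      rw [← DK.sum_sq_transpose (B' * Matrix.diagonal σtil), Matrix.transpose_mul,
        Matrix.diagonal_transpose]
    rw [h2, DK.orth_frob hB', DK.sum_sq_diagonal]
  set S2 := ∑ i ∈ Finset.univ.filter (fun i : Fin N => r ≤ (i : ℕ)), ∑ j, Z i j ^ 2 with hS2
  have hsplitZ : ∑ i, ∑ j, Z i j ^ 2 = (∑ i, σtil i ^ 2) + S2 := by
    rw [DK.sum_split hrN' (fun i => ∑ j, Z i j ^ 2), hS2]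
    congr 1
    calc ∑ k : Fin r, ∑ j, Z (e k) j ^ 2
        = ∑ k : Fin r, ∑ j, (Fᵀ * Ft) j k ^ 2 :=
          Finset.sum_congr rfl fun k _ => Finset.sum_congr rfl fun j _ => by rw [hZH]
      _ = ∑ j, ∑ k, (Fᵀ * Ft) j k ^ 2 := Finset.sum_comm
      _ = ∑ i, σtil i ^ 2 := hHsq
  have hS2' : S2 = (r : ℝ) - ∑ i, σtil i ^ 2 := by linarith [hsplitZ, hTotZ]
  -- singular values at most one
  have hDdiag : A'ᵀ * (Fᵀ * Ft) * B' = Matrix.diagonal σtil := by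
    rw [hH]
    calc A'ᵀ * (A' * Matrix.diagonal σtil * B'ᵀ) * B'
        = A'ᵀ * A' * Matrix.diagonal σtil * (B'ᵀ * B') := by
          simp only [Matrix.mul_assoc]
      _ = Matrix.diagonal σtil := by rw [hA', hB', Matrix.one_mul, Matrix.mul_one]
  have hsig1 : ∀ i, σtil i ≤ 1 := by
    intro i
    have h0 : σtil i = (fun k => A' k i) ⬝ᵥ ((Fᵀ * Ft) *ᵥ (fun l => B' l i)) := by
      have h1 := congrFun (congrFun hDdiag i) i
      rw [Matrix.diagonal_apply_eq] at h1
      rw [← h1]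
      simp only [Matrix.mul_apply, Matrix.mulVec, dotProduct, Matrix.transpose_apply,
        Finset.sum_mul, Finset.mul_sum]
      rw [Finset.sum_comm]
      exact Finset.sum_congr rfl fun l _ => Finset.sum_congr rfl fun k _ =>
        Finset.sum_congr rfl fun a _ => by ring
    have hna : vecNorm (fun k => A' k i) = 1 := by
      have h1 : ∑ k, (A' k i) ^ 2 = 1 := by
        have h2 := congrFun (congrFun hA' i) i
        simp only [Matrix.mul_apply, Matrix.transpose_apply, Matrix.one_apply_eq] at h2
        rw [← h2]
        exact Finset.sum_congr rfl fun k _ => by ring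
      rw [vecNorm, h1, Real.sqrt_one]
    have hnb : vecNorm (fun l => B' l i) = 1 := by
      have h1 : ∑ l, (B' l i) ^ 2 = 1 := by
        have h2 := congrFun (congrFun hB' i) i
        simp only [Matrix.mul_apply, Matrix.transpose_apply, Matrix.one_apply_eq] at h2
        rw [← h2]
        exact Finset.sum_congr rfl fun k _ => by ring
      rw [vecNorm, h1, Real.sqrt_one]
    have hv : vecNorm ((Fᵀ * Ft) *ᵥ (fun l => B' l i)) ≤ 1 := by
      rw [← Matrix.mulVec_mulVec]
      calc vecNorm (Fᵀ *ᵥ (Ft *ᵥ (fun l => B' l i)))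
          ≤ vecNorm (Ft *ᵥ (fun l => B' l i)) := DK.transpose_mulVec_le hFF _
        _ = vecNorm (fun l => B' l i) := DK.orth_mulVec hFtFt _
        _ = 1 := hnb
    calc σtil i = (fun k => A' k i) ⬝ᵥ ((Fᵀ * Ft) *ᵥ (fun l => B' l i)) := h0
      _ ≤ vecNorm (fun k => A' k i) * vecNorm ((Fᵀ * Ft) *ᵥ (fun l => B' l i)) :=
          DK.dot_le _ _
      _ ≤ 1 * 1 := by
          simpa [hna] using hv
      _ = 1 := one_mul 1
  -- Frobenius expansion of the target
  have hFtsq : ∑ i, ∑ j, Ft i j ^ 2 = (r : ℝ) := by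
    rw [DK.sum_sq_eq_trace, hFtFt]
    simp [Matrix.one_apply]
  have hFGsq : ∑ i, ∑ j, (F * G) i j ^ 2 = (r : ℝ) := by
    rw [DK.orth_frob hFF G, hG, DK.orth_frob hA' B'ᵀ, DK.sum_sq_transpose,
      DK.sum_sq_eq_trace, hB']
    simp [Matrix.one_apply]
  have hcross : ∑ i, ∑ j, (Ft i j * (F * G) i j) = ∑ i, σtil i := by
    have hswap : ∑ i, ∑ j, (Ft i j * (F * G) i j) = ∑ j, (Ftᵀ * (F * G)) j j :=
      DK.sum_mul_eq_trace Ft (F * G)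
    rw [hswap]
    have h2 : Ftᵀ * F = B' * Matrix.diagonal σtil * A'ᵀ := by
      have h3 := congrArg Matrix.transpose hH
      rw [Matrix.transpose_mul, Matrix.transpose_transpose] at h3
      rw [h3, Matrix.transpose_mul, Matrix.transpose_mul, Matrix.transpose_transpose,
        Matrix.diagonal_transpose]
      simp only [Matrix.mul_assoc]
    have h1 : Ftᵀ * (F * G) = B' * Matrix.diagonal σtil * B'ᵀ := by
      rw [← Matrix.mul_assoc, h2, hG]
      calc B' * Matrix.diagonal σtil * A'ᵀ * (A' * B'ᵀ)
          = B' * Matrix.diagonal σtil * (A'ᵀ * A') * B'ᵀ := by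
            simp only [Matrix.mul_assoc]
        _ = B' * Matrix.diagonal σtil * B'ᵀ := by rw [hA', Matrix.mul_one]
    rw [h1]
    have h4 : ∑ j, (B' * Matrix.diagonal σtil * B'ᵀ) j j
        = Matrix.trace (B' * (Matrix.diagonal σtil * B'ᵀ)) := by
      rw [← Matrix.mul_assoc]
      simp [Matrix.trace, Matrix.diag]
    rw [h4, Matrix.trace_mul_comm, Matrix.mul_assoc, hB', Matrix.mul_one,
      Matrix.trace_diagonal]
  have hLHS : ∑ i, ∑ j, (Ft - F * G) i j ^ 2 = 2 * ((r : ℝ) - ∑ i, σtil i) := by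
    have h1 : ∀ (i : Fin N) (j : Fin r), (Ft - F * G) i j ^ 2
        = Ft i j ^ 2 - 2 * (Ft i j * (F * G) i j) + (F * G) i j ^ 2 := by
      intro i j
      simp only [Matrix.sub_apply]
      ring
    calc ∑ i, ∑ j, (Ft - F * G) i j ^ 2
        = ∑ i, ∑ j, (Ft i j ^ 2 - 2 * (Ft i j * (F * G) i j) + (F * G) i j ^ 2) :=
          Finset.sum_congr rfl fun i _ => Finset.sum_congr rfl fun j _ => h1 i j
      _ = (∑ i, ∑ j, Ft i j ^ 2) - 2 * (∑ i, ∑ j, Ft i j * (F * G) i j)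
            + ∑ i, ∑ j, (F * G) i j ^ 2 := by
          simp only [Finset.sum_add_distrib, Finset.sum_sub_distrib, Finset.mul_sum]
      _ = 2 * ((r : ℝ) - ∑ i, σtil i) := by rw [hFtsq, hFGsq, hcross]; ring
  -- entrywise bound on the bad block
  have hentry : ∀ i ∈ Finset.univ.filter (fun i : Fin N => r ≤ (i : ℕ)), ∀ j : Fin r,
      (δ - specNorm W) ^ 2 * Z i j ^ 2 ≤ Y i j ^ 2 := by
    intro i hi j
    have hir : r ≤ (i : ℕ) := (Finset.mem_filter.1 hi).2
    have h1 : lam ⟨r - 1, by omega⟩ ≤ lam (e j) := by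
      apply hlam (e j) ⟨r - 1, by omega⟩
      rw [Fin.le_def]
      have := j.isLt
      simp [he, Fin.castLE]
      omega
    have h2 : lamt i ≤ lamt ⟨r, hrN⟩ := by
      apply hlamt ⟨r, hrN⟩ i
      rw [Fin.le_def]
      exact hir
    have h3 : δ - specNorm W ≤ lam (e j) - lamt i := by
      rw [hδ]
      linarith [hweyl]
    have h4 : (δ - specNorm W) ^ 2 ≤ (lam (e j) - lamt i) ^ 2 :=
      pow_le_pow_left₀ hgap.le h3 2
    have h5 : (lam (e j) - lamt i) ^ 2 * Z i j ^ 2 = Y i j ^ 2 := by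
      rw [← key i j]; ring
    nlinarith [sq_nonneg (Z i j)]
  have hYtot : ∑ i, ∑ j, Y i j ^ 2 = ∑ i, ∑ j, (W * F) i j ^ 2 := by
    rw [hY]
    exact DK.orth_frob hQtT (W * F)
  have hS2bound : (δ - specNorm W) ^ 2 * S2 ≤ ∑ i, ∑ j, (W * F) i j ^ 2 := by
    calc (δ - specNorm W) ^ 2 * S2
        = ∑ i ∈ Finset.univ.filter (fun i : Fin N => r ≤ (i : ℕ)),
            ∑ j, (δ - specNorm W) ^ 2 * Z i j ^ 2 := by
          rw [hS2, Finset.mul_sum]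
          exact Finset.sum_congr rfl fun i _ => Finset.mul_sum _ _ _
      _ ≤ ∑ i ∈ Finset.univ.filter (fun i : Fin N => r ≤ (i : ℕ)), ∑ j, Y i j ^ 2 :=
          Finset.sum_le_sum fun i hi => Finset.sum_le_sum fun j _ => hentry i hi j
      _ ≤ ∑ i, ∑ j, Y i j ^ 2 :=
          Finset.sum_le_sum_of_subset_of_nonneg (Finset.filter_subset _ _)
            (fun i _ _ => Finset.sum_nonneg fun j _ => sq_nonneg _)
      _ = ∑ i, ∑ j, (W * F) i j ^ 2 := hYtot
  have hsig2 : ∑ i, σtil i ^ 2 ≤ ∑ i, σtil i :=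
    Finset.sum_le_sum fun i _ => by nlinarith [hσtil i, hsig1 i]
  -- assemble
  refine DK.frobNorm_le_of_sq_le
    (div_nonneg (mul_nonneg (Real.sqrt_nonneg 2) (DK.frobNorm_nonneg _)) hgap.le) ?_
  have hRsq : (Real.sqrt 2 * frobNorm (W * F) / (δ - specNorm W)) ^ 2
      = 2 * (∑ i, ∑ j, (W * F) i j ^ 2) / (δ - specNorm W) ^ 2 := by
    rw [div_pow, mul_pow, Real.sq_sqrt (by norm_num : (0:ℝ) ≤ 2), DK.frobNorm_sq]
  rw [hRsq, hLHS, le_div_iff₀ (pow_pos hgap 2)]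
  have hrT : (r : ℝ) - ∑ i, σtil i ≤ S2 := by
    rw [hS2']
    linarith [hsig2]
  nlinarith [hS2bound, hrT, sq_nonneg (δ - specNorm W)]
end
end

section
/- For every λ > 0 and a > 2, the SCAD thresholding function T_{λ,a}(x), defined by T_{λ,a}(x) = sign(x)·max(|x| − λ, 0) for |x| ≤ 2λ, T_{λ,a}(x) = ((a−1)x − sign(x)·aλ)/(a−2) for 2λ < |x| < aλ, and T_{λ,a}(x) = x for |x| ≥ aλ, satisfies: (P1) T_{λ,a}(x) = 0 for all |x| ≤ λ; (P2) |T_{λ,a}(x) − T_{λ,a}(y)| ≤ ((a−1)/(a−2))·|x − y| for all x, y ∈ ℝ (i.e., property (P2) holds with K = (a−1)/(a−2)); (P3) |T_{λ,a}(x) − x| ≤ λ for all x ∈ ℝ (i.e., property (P3) holds with B = 1). -/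
noncomputable section

/-- The SCAD thresholding function `T_{λ,a}`. -/
def scadThresh (lam a x : ℝ) : ℝ :=
  if |x| ≤ 2 * lam then Real.sign x * max (|x| - lam) 0
  else if |x| < a * lam then ((a - 1) * x - Real.sign x * (a * lam)) / (a - 2)
  else x

lemma scad_odd (lam a x : ℝ) : scadThresh lam a (-x) = - scadThresh lam a x := by
  unfold scadThresh
  rw [abs_neg, Real.sign_neg]
  split_ifs <;> ring

lemma scad_zero (lam a : ℝ) (hlam : 0 < lam) : scadThresh lam a 0 = 0 := by
  unfold scadThresh
  rw [abs_zero, Real.sign_zero, if_pos (by linarith)]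
  ring

/-- Closed form on nonnegative reals. -/
lemma scad_nonneg_eq (lam a : ℝ) (hlam : 0 < lam) (ha : 2 < a) (x : ℝ) (hx : 0 ≤ x) :
    scadThresh lam a x
      = min x (max (((a - 1) * x - a * lam) / (a - 2)) (max (x - lam) 0)) := by
  have ha2 : (0:ℝ) < a - 2 := by linarith
  rcases eq_or_lt_of_le hx with h0 | h0
  · rw [← h0, scad_zero lam a hlam]
    have hL : ((a - 1) * 0 - a * lam) / (a - 2) ≤ 0 := by
      apply div_nonpos_of_nonpos_of_nonneg <;> nlinarith
    rw [max_eq_right (by linarith : (0:ℝ) - lam ≤ 0), max_eq_right hL, min_self]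
  · have hsign : Real.sign x = 1 := Real.sign_of_pos h0
    have habs : |x| = x := abs_of_pos h0
    unfold scadThresh
    rw [habs, hsign]
    split_ifs with h1 h2
    · have hL : ((a - 1) * x - a * lam) / (a - 2) ≤ x - lam := by
        rw [div_le_iff₀ ha2]; nlinarith
      rw [max_eq_right (le_trans hL (le_max_left _ _)),
        min_eq_right (max_le (by linarith) hx)]
      ring
    · have hL1 : x - lam ≤ ((a - 1) * x - a * lam) / (a - 2) := by
        rw [le_div_iff₀ ha2]; nlinarith
      have hL0 : (0:ℝ) ≤ ((a - 1) * x - a * lam) / (a - 2) := by linarith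
      have hL2 : ((a - 1) * x - a * lam) / (a - 2) ≤ x := by
        rw [div_le_iff₀ ha2]; nlinarith
      rw [max_eq_left (max_le hL1 hL0), min_eq_right hL2]
      ring
    · have hax : a * lam ≤ x := le_of_not_gt h2
      have hL1 : x ≤ ((a - 1) * x - a * lam) / (a - 2) := by
        rw [le_div_iff₀ ha2]; nlinarith
      exact (min_eq_left (le_trans hL1 (le_max_left _ _))).symm

lemma mono_of_odd {f : ℝ → ℝ} (hodd : ∀ x, f (-x) = - f x)
    (hmono : ∀ x y, 0 ≤ x → x ≤ y → f x ≤ f y) : Monotone f := by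
  have hf0 : f 0 = 0 := by
    have := hodd 0; rw [neg_zero] at this; linarith
  intro x y hxy
  rcases le_or_gt 0 x with hx | hx
  · exact hmono x y hx hxy
  · rcases le_or_gt y 0 with hy | hy
    · have h := hmono (-y) (-x) (by linarith) (by linarith)
      rw [hodd, hodd] at h; linarith
    · have h1 : f 0 ≤ f (-x) := hmono 0 (-x) le_rfl (by linarith)
      have h2 : f 0 ≤ f y := hmono 0 y le_rfl (by linarith)
      have h3 := hodd x
      rw [hf0] at h1 h2
      linarith

/-- Key Lipschitz-type estimate on nonnegative reals. -/
lemma scad_lip_nonneg (lam a : ℝ) (hlam : 0 < lam) (ha : 2 < a) (x y : ℝ)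
    (hx : 0 ≤ x) (hxy : x ≤ y) :
    scadThresh lam a y - scadThresh lam a x ≤ (a - 1) / (a - 2) * (y - x) := by
  have ha2 : (0:ℝ) < a - 2 := by linarith
  rw [scad_nonneg_eq lam a hlam ha x hx, scad_nonneg_eq lam a hlam ha y (hx.trans hxy)]
  set Lx := ((a - 1) * x - a * lam) / (a - 2) with hLxdef
  set Ly := ((a - 1) * y - a * lam) / (a - 2) with hLydef
  set D := (a - 1) / (a - 2) * (y - x) with hDdef
  have hD1 : Ly - Lx = D := by
    rw [hLxdef, hLydef, hDdef]; ring
  have hD2 : y - x ≤ D := by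
    rw [hDdef]
    have hK : (1:ℝ) ≤ (a - 1) / (a - 2) := by
      rw [le_div_iff₀ ha2]; linarith
    nlinarith
  have hD0 : 0 ≤ D := by linarith
  simp only [min_def, max_def]
  split_ifs <;> linarith

lemma scad_mono (lam a : ℝ) (hlam : 0 < lam) (ha : 2 < a) :
    Monotone (scadThresh lam a) := by
  apply mono_of_odd (scad_odd lam a)
  intro x y hx hxy
  have ha2 : (0:ℝ) < a - 2 := by linarith
  rw [scad_nonneg_eq lam a hlam ha x hx, scad_nonneg_eq lam a hlam ha y (hx.trans hxy)]
  have hL : ((a - 1) * x - a * lam) / (a - 2) ≤ ((a - 1) * y - a * lam) / (a - 2) := by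
    rw [div_le_div_iff₀ ha2 ha2]
    nlinarith [mul_nonneg (mul_nonneg (by linarith : (0:ℝ) ≤ a - 1)
      (by linarith : (0:ℝ) ≤ y - x)) (by linarith : (0:ℝ) ≤ a - 2)]
  exact min_le_min hxy (max_le_max hL (max_le_max (by linarith) le_rfl))

/-- For every `λ > 0` and `a > 2`, the SCAD thresholding function satisfies
(P1), (P2) with `K = (a−1)/(a−2)`, and (P3) with `B = 1`. -/
theorem stmt16 (lam a : ℝ) (hlam : 0 < lam) (ha : 2 < a) :
    (∀ x : ℝ, |x| ≤ lam → scadThresh lam a x = 0) ∧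
    (∀ x y : ℝ, |scadThresh lam a x - scadThresh lam a y| ≤ (a - 1) / (a - 2) * |x - y|) ∧
    (∀ x : ℝ, |scadThresh lam a x - x| ≤ 1 * lam) := by
  have ha2 : (0:ℝ) < a - 2 := by linarith
  have hmono := scad_mono lam a hlam ha
  have hlip : ∀ x y : ℝ, x ≤ y →
      scadThresh lam a y - scadThresh lam a x ≤ (a - 1) / (a - 2) * (y - x) := by
    have hg : Monotone (fun x => (a - 1) / (a - 2) * x - scadThresh lam a x) := by
      apply mono_of_odd
      · intro x; rw [scad_odd]; ring
      · intro x y hx hxy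
        show (a - 1) / (a - 2) * x - scadThresh lam a x
          ≤ (a - 1) / (a - 2) * y - scadThresh lam a y
        have := scad_lip_nonneg lam a hlam ha x y hx hxy
        linarith
    intro x y hxy
    have h2 : (a - 1) / (a - 2) * x - scadThresh lam a x
        ≤ (a - 1) / (a - 2) * y - scadThresh lam a y := hg hxy
    linarith
  refine ⟨?_, ?_, ?_⟩
  · -- P1
    intro x hx
    have key : ∀ z : ℝ, 0 ≤ z → z ≤ lam → scadThresh lam a z = 0 := by
      intro z hz hzl
      rw [scad_nonneg_eq lam a hlam ha z hz]
      have hL : ((a - 1) * z - a * lam) / (a - 2) ≤ 0 := by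
        apply div_nonpos_of_nonpos_of_nonneg <;> nlinarith
      rw [max_eq_right (by linarith : z - lam ≤ 0), max_eq_right hL, min_eq_right hz]
    rcases le_or_gt 0 x with hx0 | hx0
    · exact key x hx0 (by rwa [abs_of_nonneg hx0] at hx)
    · have : scadThresh lam a (-x) = 0 := key (-x) (by linarith)
        (by rwa [abs_of_neg hx0] at hx)
      rw [scad_odd] at this; linarith
  · -- P2
    intro x y
    rcases le_total x y with h | h
    · rw [abs_sub_comm, abs_of_nonneg (by linarith [hmono h]),
        abs_sub_comm, abs_of_nonneg (by linarith : 0 ≤ y - x)]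
      exact hlip x y h
    · rw [abs_of_nonneg (by linarith [hmono h]), abs_of_nonneg (by linarith : 0 ≤ x - y)]
      exact hlip y x h
  · -- P3
    intro x
    have key : ∀ z : ℝ, 0 ≤ z → |scadThresh lam a z - z| ≤ 1 * lam := by
      intro z hz
      rw [scad_nonneg_eq lam a hlam ha z hz, abs_le]
      constructor
      · have h1 : z - lam ≤ max ((z - lam)) 0 := le_max_left _ _
        have h2 : z - lam ≤ min z (max (((a - 1) * z - a * lam) / (a - 2)) (max (z - lam) 0)) :=
          le_min (by linarith) (le_trans (le_trans h1 (le_max_right _ _)) le_rfl)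
        linarith
      · have := min_le_left z (max (((a - 1) * z - a * lam) / (a - 2)) (max (z - lam) 0))
        linarith
    rcases le_or_gt 0 x with hx0 | hx0
    · exact key x hx0
    · have := key (-x) (by linarith)
      rw [scad_odd, ← abs_neg] at this
      convert this using 2
      ring
end
end
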